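/- Work with a finite oriented multigraph given by finite types V (vertices) and E (edges) together with maps s t : E → V, with V nonempty. Assume the multigraph has no loops and is connected. Let θ : Equiv.Perm V and let M : Matrix E E ℤ be a chain map over θ that is HTC. Then for every natural number m with 1 ≤ m such that θ ^ m has no fixed points (i.e., (θ ^ m) x ≠ x for every x : V), one has Matrix.trace (M ^ m) = -1. -/

import Mathlib

/-- The boundary matrix of a finite oriented multigraph with source map `s`
and target map `t`: `∂ v e = [v = t e] - [v = s e]`. -/
def boundaryMatrix {V E : Type*} [DecidableEq V] (s t : E → V) : Matrix V E ℤ :=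
  fun v e => (if v = t e then 1 else 0) - (if v = s e then 1 else 0)

/-- The permutation matrix of `θ`: `P_θ u w = [u = θ w]`. -/
def permMatrix {V : Type*} [DecidableEq V] (θ : Equiv.Perm V) : Matrix V V ℤ :=
  fun u w => if u = θ w then 1 else 0

/-- `M` is a chain map over the vertex permutation `θ`: `∂ * M = P_θ * ∂`. -/
def IsChainMap {V E : Type*} [DecidableEq V] [Fintype V] [Fintype E]
    (s t : E → V) (θ : Equiv.Perm V) (M : Matrix E E ℤ) : Prop :=
  boundaryMatrix s t * M = permMatrix θ * boundaryMatrix s t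

/-- `M` is HTC (homotopic-to-a-constant-map condition): `M` annihilates the
cycle space, i.e. the kernel of the boundary matrix. -/
def IsHTC {V E : Type*} [DecidableEq V] [Fintype E]
    (s t : E → V) (M : Matrix E E ℤ) : Prop :=
  ∀ x : E → ℤ, (boundaryMatrix s t).mulVec x = 0 → M.mulVec x = 0

/-- The multigraph has no loops: `s e ≠ t e` for every edge. -/
def NoLoops {V E : Type*} (s t : E → V) : Prop :=
  ∀ e : E, s e ≠ t e

/-- The multigraph is connected: the smallest equivalence relation relating
`s e` and `t e` for every edge `e` is the total relation. -/
def IsConn {V E : Type*} (s t : E → V) : Prop :=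
  ∀ u v : V, Relation.EqvGen (fun a b => ∃ e : E, s e = a ∧ t e = b) u v

lemma exists_left_factor {E V : Type*} [Fintype E] [Fintype V] [DecidableEq E] [DecidableEq V]
    (B : Matrix V E ℚ) (N : Matrix E E ℚ)
    (h : ∀ x : E → ℚ, B.mulVec x = 0 → N.mulVec x = 0) :
    ∃ L : Matrix E V ℚ, N = L * B := by
  set f := Matrix.toLin' B with hf
  set g := Matrix.toLin' N with hg
  obtain ⟨sec, hsec⟩ := f.rangeRestrict.exists_rightInverse_of_surjective
    (LinearMap.range_eq_top.2 f.surjective_rangeRestrict)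
  obtain ⟨h1, hh1⟩ := (g ∘ₗ sec).exists_extend
  refine ⟨LinearMap.toMatrix' h1, ?_⟩
  have hcomp : h1 ∘ₗ f = g := by
    refine LinearMap.ext fun x => ?_
    have h2 : f (sec (f.rangeRestrict x)) = f x := by
      have := congrArg (fun p => p (f.rangeRestrict x)) hsec
      simpa using congrArg Subtype.val this
    have h3 : g (sec (f.rangeRestrict x)) = g x := by
      have hk : B.mulVec (sec (f.rangeRestrict x) - x) = 0 := by
        have : f (sec (f.rangeRestrict x) - x) = 0 := by rw [map_sub, h2, sub_self]
        simpa [hf, Matrix.toLin'_apply] using this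
      have := h _ hk
      have : g (sec (f.rangeRestrict x) - x) = 0 := by
        simpa [hg, Matrix.toLin'_apply] using this
      rw [map_sub] at this
      exact sub_eq_zero.mp this
    calc h1 (f x) = h1 ((LinearMap.range f).subtype (f.rangeRestrict x)) := rfl
      _ = g (sec (f.rangeRestrict x)) := by
        have := congrArg (fun p => p (f.rangeRestrict x)) hh1
        simpa using this
      _ = g x := h3
  have : LinearMap.toMatrix' h1 * B = N := by
    rw [← LinearMap.toMatrix'_toLin' B, ← LinearMap.toMatrix'_comp, hcomp, hg,
      LinearMap.toMatrix'_toLin']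
  exact this.symm

lemma cast_mulVec {E V : Type*} [Fintype E] (A : Matrix V E ℤ) (y : E → ℤ) (v : V) :
    ((A.mulVec y v : ℤ) : ℚ) = (A.map (Int.cast : ℤ → ℚ)).mulVec (fun e => (y e : ℚ)) v := by
  simp [Matrix.mulVec, dotProduct, Matrix.map_apply]

/-- Key lemma: trace of a fixed-point-free HTC chain map is -1. -/
lemma key_trace {V E : Type*} [Fintype V] [DecidableEq V] [Fintype E] [DecidableEq E] [Nonempty V]
    (s t : E → V) (hconn : IsConn s t)
    (σ : Equiv.Perm V) (hfix : ∀ x : V, σ x ≠ x)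
    (N : Matrix E E ℤ)
    (hN : boundaryMatrix s t * N = permMatrix σ * boundaryMatrix s t)
    (hH : ∀ x : E → ℤ, (boundaryMatrix s t).mulVec x = 0 → N.mulVec x = 0) :
    Matrix.trace N = -1 := by
  classical
  set B : Matrix V E ℚ := (boundaryMatrix s t).map (Int.cast : ℤ → ℚ) with hB
  set Nq : Matrix E E ℚ := N.map (Int.cast : ℤ → ℚ) with hNq
  set P : Matrix V V ℚ := (permMatrix σ).map (Int.cast : ℤ → ℚ) with hP
  have hmap : B * Nq = P * B := by
    ext v e
    have h := congrFun (congrFun hN v) e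
    simp only [Matrix.mul_apply, Matrix.map_apply, hB, hNq, hP, Matrix.mul_apply] at h ⊢
    exact_mod_cast h
  -- HTC over ℚ
  have hHq : ∀ x : E → ℚ, B.mulVec x = 0 → Nq.mulVec x = 0 := by
    intro x hx
    obtain ⟨b, hb⟩ := IsLocalization.exist_integer_multiples_of_finite
      (nonZeroDivisors ℤ) x
    choose y hy using fun e => hb e
    have hyx : (fun e => (y e : ℚ)) = ((b : ℤ) : ℚ) • x := by
      funext e
      have := hy e
      simpa [Algebra.smul_def] using this
    have h0 : (boundaryMatrix s t).mulVec y = 0 := by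
      funext v
      have : ((((boundaryMatrix s t).mulVec y) v : ℤ) : ℚ) = 0 := by
        rw [cast_mulVec, ← hB, hyx, Matrix.mulVec_smul, hx]
        simp
      exact_mod_cast this
    have h1 := hH y h0
    have h2 : Nq.mulVec ((((b : ℤ) : ℚ)) • x) = 0 := by
      rw [← hyx]
      funext e
      simp only [Pi.zero_apply, hNq]
      rw [← cast_mulVec N y e, h1]
      simp
    rw [Matrix.mulVec_smul] at h2
    have hb0 : (((b : ℤ) : ℚ)) ≠ 0 := by
      have := nonZeroDivisors.coe_ne_zero b
      exact_mod_cast this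
    exact (smul_eq_zero.mp h2).resolve_left hb0
  obtain ⟨L, hL⟩ := exists_left_factor B Nq hHq
  set Q : Matrix V V ℚ := B * L - P with hQ
  have hQB : Q * B = 0 := by
    have : B * L * B = P * B := by
      rw [Matrix.mul_assoc, ← hL, hmap]
    rw [hQ, Matrix.sub_mul, this, sub_self]
  -- columns of Q at s e and t e agree
  have hedge : ∀ (w : V) (e : E), Q w (s e) = Q w (t e) := by
    intro w e
    have := congrFun (congrFun hQB w) e
    simp only [Matrix.mul_apply, Matrix.zero_apply] at this
    have hcol : ∀ u, Q w u * B u e = Q w u * ((if u = t e then (1:ℚ) else 0)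
        - (if u = s e then 1 else 0)) := by
      intro u; simp only [hB, boundaryMatrix, Matrix.map_apply]; push_cast; ring
    rw [Finset.sum_congr rfl (fun u _ => hcol u)] at this
    simp only [mul_sub, Finset.sum_sub_distrib, mul_ite, mul_one, mul_zero] at this
    rw [Finset.sum_ite_eq' Finset.univ (t e), Finset.sum_ite_eq' Finset.univ (s e)] at this
    simp only [Finset.mem_univ, if_true] at this
    linarith
  -- all columns of Q agree
  have hcols : ∀ (w u v : V), Q w u = Q w v := by
    intro w u v
    induction hconn u v with
    | rel a b hab => obtain ⟨e, he1, he2⟩ := hab; rw [← he1, ← he2]; exact hedge w e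
    | refl a => rfl
    | symm a b _ ih => exact ih.symm
    | trans a b c _ _ ih1 ih2 => exact ih1.trans ih2
  -- column sums of B*L are 0
  have hsumB : ∀ e : E, ∑ w, B w e = 0 := by
    intro e
    simp [hB, boundaryMatrix, Matrix.map_apply, Finset.sum_sub_distrib]
  have hsumBL : ∀ u : V, ∑ w, (B * L) w u = 0 := by
    intro u
    simp only [Matrix.mul_apply]
    rw [Finset.sum_comm]
    refine Finset.sum_eq_zero fun e _ => ?_
    rw [← Finset.sum_mul, hsumB, zero_mul]
  have hsumP : ∀ u : V, ∑ w, P w u = 1 := by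
    intro u
    simp [hP, permMatrix, Matrix.map_apply]
  have hsumQ : ∀ u : V, ∑ w, Q w u = -1 := by
    intro u
    simp only [hQ, Matrix.sub_apply, Finset.sum_sub_distrib, hsumBL, hsumP]
    ring
  -- trace of P is 0
  have htrP : Matrix.trace P = 0 := by
    simp only [Matrix.trace, Matrix.diag, hP, permMatrix, Matrix.map_apply]
    refine Finset.sum_eq_zero fun v _ => ?_
    simp [Ne.symm (hfix v)]
  -- trace computation
  obtain ⟨u0⟩ := ‹Nonempty V›
  have htrQ : Matrix.trace Q = -1 := by
    have : ∀ v : V, Q v v = Q v u0 := fun v => hcols v v u0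
    calc Matrix.trace Q = ∑ v, Q v u0 := by
          simp only [Matrix.trace, Matrix.diag]
          exact Finset.sum_congr rfl fun v _ => this v
      _ = -1 := hsumQ u0
  have htrNq : Matrix.trace Nq = -1 := by
    calc Matrix.trace Nq = Matrix.trace (L * B) := by rw [hL]
      _ = Matrix.trace (B * L) := Matrix.trace_mul_comm L B
      _ = Matrix.trace (P + Q) := by rw [hQ]; congr 1; abel
      _ = Matrix.trace P + Matrix.trace Q := Matrix.trace_add P Q
      _ = -1 := by rw [htrP, htrQ]; ring
  have : ((Matrix.trace N : ℤ) : ℚ) = -1 := by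
    rw [← htrNq]
    simp [Matrix.trace, Matrix.diag, hNq, Matrix.map_apply]
  exact_mod_cast this

lemma permMatrix_mul {V : Type*} [DecidableEq V] [Fintype V] (α β : Equiv.Perm V) :
    permMatrix α * permMatrix β = permMatrix (α * β) := by
  ext u w
  simp only [Matrix.mul_apply, permMatrix]
  rw [Finset.sum_eq_single (β w)]
  · simp [Equiv.Perm.mul_apply]; exact if_congr Iff.rfl rfl rfl
  · intro x _ hx; simp [hx]
  · simp

theorem trace_pow_eq_neg_one_of_pow_fixedPointFree
    {V E : Type*} [Fintype V] [DecidableEq V] [Fintype E] [DecidableEq E] [Nonempty V]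
    (s t : E → V) (hloop : NoLoops s t) (hconn : IsConn s t)
    (θ : Equiv.Perm V)
    (M : Matrix E E ℤ) (hM : IsChainMap s t θ M) (hMhtc : IsHTC s t M) :
    ∀ m : ℕ, 1 ≤ m → (∀ x : V, (θ ^ m) x ≠ x) → Matrix.trace (M ^ m) = -1 := by
  intro m hm hfix
  have hchain : ∀ k : ℕ, boundaryMatrix s t * M ^ k = permMatrix (θ ^ k) * boundaryMatrix s t := by
    intro k
    induction k with
    | zero =>
      simp only [pow_zero]
      have h1 : permMatrix (1 : Equiv.Perm V) = (1 : Matrix V V ℤ) := by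
        ext u w; simp [permMatrix, Matrix.one_apply]; exact if_congr Iff.rfl rfl rfl
      rw [h1, Matrix.one_mul, Matrix.mul_one]
    | succ k ih =>
      rw [pow_succ, ← Matrix.mul_assoc, ih, Matrix.mul_assoc, hM, ← Matrix.mul_assoc,
        permMatrix_mul, ← pow_succ]
  have hhtc : ∀ x : E → ℤ, (boundaryMatrix s t).mulVec x = 0 → (M ^ m).mulVec x = 0 := by
    intro x hx
    obtain ⟨k, rfl⟩ : ∃ k, m = k + 1 := ⟨m - 1, (Nat.succ_pred_eq_of_pos hm).symm⟩
    rw [pow_succ, ← Matrix.mulVec_mulVec, hMhtc x hx]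
    simp [Matrix.mulVec_zero]
  exact key_trace s t hconn (θ ^ m) hfix (M ^ m) (hchain m) hhtc
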